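/- Let M : Fin k → Fin l → ℝ be a Monge matrix, let j1 ≤ j ≤ j2 be columns, and let ρ1, ρ2 be rows with ρ2 ≤ ρ1 such that ρ1 attains the column minimum of column j1 and ρ2 attains the column minimum of column j2. Then there exists a row r with ρ2 ≤ r ≤ ρ1 that attains the column minimum of column j. (The 'sandwiching' claim proved and used in Section 4 of the paper to restrict the search for minima of the columns of a block to the rows between the minimizing rows of the two neighboring blocks.) -/
import Mathlib


/-- A rectangular Monge matrix. -/
def IsMonge {k l : ℕ} (M : Fin k → Fin l → ℝ) : Prop :=
  ∀ i1 i2 : Fin k, ∀ j1 j2 : Fin l, i1 ≤ i2 → j1 ≤ j2 →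
    M i2 j1 + M i1 j2 ≤ M i1 j1 + M i2 j2

/-- Row `r` attains the column minimum of column `c`. -/
def ColMinAt {k l : ℕ} (M : Fin k → Fin l → ℝ) (r : Fin k) (c : Fin l) : Prop :=
  ∀ i : Fin k, M r c ≤ M i c

/-- Sandwiching: if `ρ1` attains the column minimum of `j1`, `ρ2` attains the
column minimum of `j2`, `ρ2 ≤ ρ1` and `j1 ≤ j ≤ j2`, then column `j` has a
column minimum attained in some row between `ρ2` and `ρ1`. -/
theorem monge_sandwich {k l : ℕ} (M : Fin k → Fin l → ℝ) (hM : IsMonge M)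
    (j1 j j2 : Fin l) (hj1 : j1 ≤ j) (hj2 : j ≤ j2)
    (ρ1 ρ2 : Fin k) (hρ : ρ2 ≤ ρ1)
    (h1 : ColMinAt M ρ1 j1) (h2 : ColMinAt M ρ2 j2) :
    ∃ r : Fin k, ρ2 ≤ r ∧ r ≤ ρ1 ∧ ColMinAt M r j := by
  obtain ⟨r, hrmem, hrmin⟩ := Finset.exists_min_image (Finset.Icc ρ2 ρ1) (fun i => M i j)
    ⟨ρ2, Finset.mem_Icc.2 ⟨le_refl _, hρ⟩⟩
  obtain ⟨hr2, hr1⟩ := Finset.mem_Icc.1 hrmem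
  refine ⟨r, hr2, hr1, fun i => ?_⟩
  rcases le_or_gt i ρ2 with hle | hgt
  · -- M ρ2 j ≤ M i j via Monge with rows i ≤ ρ2, cols j ≤ j2
    have hmonge := hM i ρ2 j j2 hle hj2
    have h2i := h2 i
    have : M ρ2 j ≤ M i j := by linarith
    have := hrmin ρ2 (Finset.mem_Icc.2 ⟨le_refl _, hρ⟩)
    linarith
  · rcases le_or_gt ρ1 i with hge | hlt
    · -- M ρ1 j ≤ M i j via Monge with rows ρ1 ≤ i, cols j1 ≤ j
      have hmonge := hM ρ1 i j1 j hge hj1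
      have h1i := h1 i
      have : M ρ1 j ≤ M i j := by linarith
      have := hrmin ρ1 (Finset.mem_Icc.2 ⟨hρ, le_refl _⟩)
      linarith
    · exact hrmin i (Finset.mem_Icc.2 ⟨hgt.le, hlt.le⟩)
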